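/- The multiclass threshold-Pairs function F_α(G) = Σ_{i≠j} max(max(nⁱ_G - α,0)·max(nʲ_G - α,0) - α², 0) is monotone and supermodular, and F_α(G) = 0 whenever all examples in G belong to the same class. -/

import Mathlib

/-- Multiclass threshold-Pairs impurity on a class-count vector `n : Fin k → ℕ`
with threshold `α`, summing over ordered pairs of distinct classes. -/
noncomputable def multiThresholdPairs {k : ℕ} (α : ℝ) (n : Fin k → ℕ) : ℝ :=
  ∑ i : Fin k, ∑ j ∈ Finset.univ \ {i},
    max (max ((n i : ℝ) - α) 0 * max ((n j : ℝ) - α) 0 - α ^ 2) 0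

noncomputable def gPair (α x y : ℝ) : ℝ :=
  max (max (x - α) 0 * max (y - α) 0 - α ^ 2) 0

lemma gPair_symm (α x y : ℝ) : gPair α x y = gPair α y x := by
  unfold gPair; rw [mul_comm]

lemma uMono (α x X : ℝ) (h : x ≤ X) : max (x - α) 0 ≤ max (X - α) 0 :=
  max_le_max (by linarith) le_rfl

lemma gPair_mono (α x y X Y : ℝ) (hx : x ≤ X) (hy : y ≤ Y) :
    gPair α x y ≤ gPair α X Y := by
  unfold gPair
  apply max_le_max _ le_rfl
  have := mul_le_mul (uMono α x X hx) (uMono α y Y hy) (le_max_right _ _)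
    (le_max_right _ _)
  linarith

lemma pconv (c s S δ Δ : ℝ) (h0 : 0 ≤ δ) (hδ : δ ≤ Δ) (hs : s ≤ S) :
    max (s + δ - c) 0 - max (s - c) 0 ≤ max (S + Δ - c) 0 - max (S - c) 0 := by
  rcases max_cases (s + δ - c) 0 with ⟨e1, h1⟩ | ⟨e1, h1⟩ <;>
    rcases max_cases (s - c) 0 with ⟨e2, h2⟩ | ⟨e2, h2⟩ <;>
    rcases max_cases (S + Δ - c) 0 with ⟨e3, h3⟩ | ⟨e3, h3⟩ <;>
    rcases max_cases (S - c) 0 with ⟨e4, h4⟩ | ⟨e4, h4⟩ <;>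
    rw [e1, e2, e3, e4] <;> linarith

lemma dMono (α x X : ℝ) (h : x ≤ X) :
    max (x + 1 - α) 0 - max (x - α) 0 ≤ max (X + 1 - α) 0 - max (X - α) 0 := by
  rcases max_cases (x + 1 - α) 0 with ⟨e1, h1⟩ | ⟨e1, h1⟩ <;>
    rcases max_cases (x - α) 0 with ⟨e2, h2⟩ | ⟨e2, h2⟩ <;>
    rcases max_cases (X + 1 - α) 0 with ⟨e3, h3⟩ | ⟨e3, h3⟩ <;>
    rcases max_cases (X - α) 0 with ⟨e4, h4⟩ | ⟨e4, h4⟩ <;>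
    rw [e1, e2, e3, e4] <;> linarith

lemma gKey (α x y X Y : ℝ) (hx : x ≤ X) (hy : y ≤ Y) :
    gPair α (x + 1) y - gPair α x y ≤ gPair α (X + 1) Y - gPair α X Y := by
  unfold gPair
  set ux := max (x - α) 0 with hux
  set ux1 := max (x + 1 - α) 0 with hux1
  set uy := max (y - α) 0 with huy
  set uX := max (X - α) 0 with huX
  set uX1 := max (X + 1 - α) 0 with huX1
  set uY := max (Y - α) 0 with huY
  have hux0 : 0 ≤ ux := le_max_right _ _
  have huy0 : 0 ≤ uy := le_max_right _ _
  have huX0 : 0 ≤ uX := le_max_right _ _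
  have huY0 : 0 ≤ uY := le_max_right _ _
  have hd0 : ux ≤ ux1 := uMono α x (x + 1) (by linarith)
  have hdm : ux1 - ux ≤ uX1 - uX := dMono α x X hx
  have huu : ux ≤ uX := uMono α x X hx
  have hvv : uy ≤ uY := uMono α y Y hy
  have hs : ux * uy ≤ uX * uY := mul_le_mul huu hvv huy0 huX0
  have hδ0 : 0 ≤ (ux1 - ux) * uy := mul_nonneg (by linarith) huy0
  have hδΔ : (ux1 - ux) * uy ≤ (uX1 - uX) * uY :=
    mul_le_mul hdm hvv huy0 (by linarith)
  have := pconv (α ^ 2) (ux * uy) (uX * uY) ((ux1 - ux) * uy)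
    ((uX1 - uX) * uY) hδ0 hδΔ hs
  have e1 : ux * uy + (ux1 - ux) * uy = ux1 * uy := by ring
  have e2 : uX * uY + (uX1 - uX) * uY = uX1 * uY := by ring
  rw [e1, e2] at this
  exact this

lemma gKey' (α x y X Y : ℝ) (hx : x ≤ X) (hy : y ≤ Y) :
    gPair α x (y + 1) - gPair α x y ≤ gPair α X (Y + 1) - gPair α X Y := by
  rw [gPair_symm α x (y + 1), gPair_symm α x y, gPair_symm α X (Y + 1),
    gPair_symm α X Y]
  exact gKey α y x Y X hy hx

lemma gPair_zero_left (α y : ℝ) (hα : 0 ≤ α) : gPair α 0 y = 0 := by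
  unfold gPair
  have h1 : max (0 - α) 0 = 0 := max_eq_right (by linarith)
  rw [h1, zero_mul]
  exact max_eq_right (by nlinarith [sq_nonneg α])

lemma gPair_zero_right (α x : ℝ) (hα : 0 ≤ α) : gPair α x 0 = 0 := by
  rw [gPair_symm]; exact gPair_zero_left α x hα

lemma multi_eq {k : ℕ} (α : ℝ) (n : Fin k → ℕ) :
    multiThresholdPairs α n =
      ∑ i : Fin k, ∑ j ∈ Finset.univ \ {i}, gPair α (n i) (n j) := rfl

theorem multiThresholdPairs_admissible {k : ℕ} (α : ℝ) (hα : 0 ≤ α) :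
    -- monotone
    (∀ nR nG : Fin k → ℕ, (∀ i, nR i ≤ nG i) →
      multiThresholdPairs α nR ≤ multiThresholdPairs α nG) ∧
    -- supermodular (adding one example of class j)
    (∀ nR nG : Fin k → ℕ, (∀ i, nR i ≤ nG i) → ∀ j : Fin k,
      multiThresholdPairs α (fun i => if i = j then nR i + 1 else nR i) -
          multiThresholdPairs α nR ≤
        multiThresholdPairs α (fun i => if i = j then nG i + 1 else nG i) -
          multiThresholdPairs α nG) ∧
    -- purity: zero when all examples belong to one class
    (∀ n : Fin k → ℕ, ∀ c : Fin k, (∀ i, i ≠ c → n i = 0) →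
      multiThresholdPairs α n = 0) := by
  refine ⟨?_, ?_, ?_⟩
  · intro nR nG h
    rw [multi_eq, multi_eq]
    apply Finset.sum_le_sum; intro i _
    apply Finset.sum_le_sum; intro j _
    exact gPair_mono α _ _ _ _ (by exact_mod_cast h i) (by exact_mod_cast h j)
  · intro nR nG h j
    simp only [multi_eq, ← Finset.sum_sub_distrib]
    apply Finset.sum_le_sum; intro i _
    apply Finset.sum_le_sum; intro j' hj'
    have hji : j' ≠ i := by
      simp only [Finset.mem_sdiff, Finset.mem_singleton] at hj'
      exact hj'.2
    by_cases hi : i = j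
    · subst hi
      have hj2 : ¬ j' = i := hji
      simp only [if_pos rfl, if_neg hj2]
      push_cast
      exact gKey α _ _ _ _ (by exact_mod_cast h i) (by exact_mod_cast h j')
    · by_cases hj2 : j' = j
      · subst hj2
        simp only [if_pos rfl, if_neg hi]
        push_cast
        exact gKey' α _ _ _ _ (by exact_mod_cast h i) (by exact_mod_cast h j')
      · simp only [if_neg hi, if_neg hj2]
        have h1 := gPair_mono α (nR i) (nR j') (nG i) (nG j')
          (by exact_mod_cast h i) (by exact_mod_cast h j')
        simp
  · intro n c hc
    rw [multi_eq]
    apply Finset.sum_eq_zero; intro i _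
    apply Finset.sum_eq_zero; intro j hj
    have hji : j ≠ i := by
      simp only [Finset.mem_sdiff, Finset.mem_singleton] at hj
      exact hj.2
    by_cases hi : i = c
    · have hz : n j = 0 := hc j (hi ▸ hji)
      rw [hz]
      exact_mod_cast gPair_zero_right α (n i) hα
    · have hz : n i = 0 := hc i hi
      rw [hz]
      exact_mod_cast gPair_zero_left α (n j) hα
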